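/- For every real α with 0 < α ≤ 1 and all x, y ≥ 0 with x ≠ y, one has (x - y)/(x^α - y^α) ≤ (1/α)(x^(1-α) + y^(1-α)). -/

import Mathlib

open Real in
lemma aux_ineq (α x y : ℝ) (hα0 : 0 < α) (hα1 : α ≤ 1)
    (hy : 0 ≤ y) (hxy : y < x) :
    (x - y) / (x ^ α - y ^ α) ≤ (1 / α) * (x ^ (1 - α) + y ^ (1 - α)) := by
  have hx : 0 < x := lt_of_le_of_lt hy hxy
  have hpow : y ^ α < x ^ α := Real.rpow_lt_rpow hy hxy hα0
  have hsub : 0 < x ^ α - y ^ α := sub_pos.2 hpow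
  -- Bernoulli: (y/x)^α ≤ 1 + α*(y/x - 1)
  have hb : (1 + (y / x - 1)) ^ α ≤ 1 + α * (y / x - 1) :=
    _root_.rpow_one_add_le_one_add_mul_self (by
      have : (0:ℝ) ≤ y / x := div_nonneg hy hx.le
      linarith) hα0.le hα1
  rw [add_sub_cancel] at hb
  have hyx : (y / x) ^ α = y ^ α / x ^ α := Real.div_rpow hy hx.le α
  rw [hyx] at hb
  have hxα : (0:ℝ) < x ^ α := Real.rpow_pos_of_pos hx α
  -- multiply by x^α : y^α ≤ x^α + α*(y/x - 1)*x^α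
  have h1 : y ^ α ≤ x ^ α + α * (y / x - 1) * x ^ α := by
    have := mul_le_mul_of_nonneg_right hb hxα.le
    rw [div_mul_cancel₀ _ hxα.ne'] at this
    linarith [this]
  -- so α * (x - y) * x^(α-1) ≤ x^α - y^α
  have h2 : α * ((x - y) / x) * x ^ α ≤ x ^ α - y ^ α := by
    have : α * (y / x - 1) = -(α * ((x - y) / x)) := by
      field_simp; ring
    rw [this] at h1; linarith
  rw [div_le_iff₀ hsub]
  have hx1α : (0:ℝ) ≤ x ^ (1 - α) := Real.rpow_nonneg hx.le _
  have hy1α : (0:ℝ) ≤ y ^ (1 - α) := Real.rpow_nonneg hy _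
  have key : x - y ≤ 1 / α * x ^ (1 - α) * (x ^ α - y ^ α) := by
    have h3 : 1 / α * x ^ (1 - α) * (α * ((x - y) / x) * x ^ α) ≤
        1 / α * x ^ (1 - α) * (x ^ α - y ^ α) :=
      mul_le_mul_of_nonneg_left h2 (mul_nonneg (by positivity) hx1α)
    calc x - y = 1 / α * x ^ (1 - α) * (α * ((x - y) / x) * x ^ α) := by
          rw [show (1:ℝ) - α = -α + 1 by ring, Real.rpow_add hx, Real.rpow_one,
            Real.rpow_neg hx.le]
          field_simp
      _ ≤ _ := h3
  calc x - y ≤ 1 / α * x ^ (1 - α) * (x ^ α - y ^ α) := key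
    _ ≤ 1 / α * (x ^ (1 - α) + y ^ (1 - α)) * (x ^ α - y ^ α) := by
        apply mul_le_mul_of_nonneg_right _ hsub.le
        have : (0:ℝ) ≤ 1 / α := by positivity
        nlinarith

theorem algebraic_ineq_ii (α x y : ℝ) (hα0 : 0 < α) (hα1 : α ≤ 1)
    (hx : 0 ≤ x) (hy : 0 ≤ y) (hxy : x ≠ y) :
    (x - y) / (x ^ α - y ^ α) ≤ (1 / α) * (x ^ (1 - α) + y ^ (1 - α)) := by
  rcases lt_or_gt_of_ne hxy with h | h
  · have := aux_ineq α y x hα0 hα1 hx h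
    have e : (x - y) / (x ^ α - y ^ α) = (y - x) / (y ^ α - x ^ α) := by
      rw [← neg_sub y x, ← neg_sub (y ^ α) (x ^ α), neg_div_neg_eq]
    rw [e]
    linarith [this]
  · exact aux_ineq α x y hα0 hα1 hy h
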